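/- For m ≥ 1 and 0 ≤ w ≤ n/2, if there exists a spherical code of dimension m(n-1) with maximum cosine s = 1 - dn/(mw(n-w)) of size N, and s < 0 with s ≥ -1/(m(n-1)), then M(m,n,2d,w) ≤ m(n-1)+1; this uses the fact that A_S(k, s) = k+1 whenever -1/k ≤ s < 0, where A_S(k,s) is the maximum size of a spherical code in dimension k with all pairwise cosines at most s. -/

import Mathlib

open Finset
open scoped RealInnerProductSpace

/-- Maximum size of a multiply constant-weight code `MCWC(m,n,d,w)`. -/
noncomputable def Mmcwc (m n d w : ℕ) : ℕ :=
  sSup {k | ∃ C : Finset (Fin m × Fin n → Bool),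
    (∀ c ∈ C, ∀ j : Fin m, (univ.filter fun i : Fin n => c (j, i) = true).card = w) ∧
    (∀ u ∈ C, ∀ v ∈ C, u ≠ v → d ≤ hammingDist u v) ∧ C.card = k}

/-- Maximum size of a spherical code in dimension `k` with all pairwise cosines
at most `s`. -/
noncomputable def Asph (k : ℕ) (s : ℝ) : ℕ :=
  sSup {N | ∃ f : Fin N → EuclideanSpace ℝ (Fin k), Function.Injective f ∧
    (∀ a, ‖f a‖ = 1) ∧ ∀ a b, a ≠ b → ⟪f a, f b⟫ ≤ s}

theorem neg_inner_card_le {E : Type*} [NormedAddCommGroup E] [InnerProductSpace ℝ E]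
    [FiniteDimensional ℝ E] {N : ℕ} (v : Fin N → E)
    (hneg : ∀ a b, a ≠ b → ⟪v a, v b⟫ < 0) :
    N ≤ Module.finrank ℝ E + 1 := by
  cases N with
  | zero => omega
  | succ N' =>
    have hli : LinearIndependent ℝ (v ∘ Fin.castSucc) := by
      rw [Fintype.linearIndependent_iff]
      intro g hg
      set w : Fin N' → E := v ∘ Fin.castSucc with hw
      set P : Finset (Fin N') := univ.filter fun i => 0 < g i with hP
      set Q : Finset (Fin N') := univ.filter fun i => g i < 0 with hQ
      have hdisj : Disjoint P Q := by
        simp only [hP, hQ, Finset.disjoint_filter]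
        intro i _ h1 h2
        linarith
      have hPQ : ∑ i ∈ P ∪ Q, g i • w i = 0 := by
        rw [← hg]
        apply Finset.sum_subset (Finset.subset_univ _)
        intro i _ hi
        simp only [Finset.mem_union, hP, hQ, Finset.mem_filter, Finset.mem_univ, true_and,
          not_or, not_lt] at hi
        have : g i = 0 := le_antisymm hi.1 hi.2
        simp [this]
      have hsum : ∑ i ∈ P, g i • w i + ∑ i ∈ Q, g i • w i = 0 := by
        rw [← Finset.sum_union hdisj]; exact hPQ
      set x : E := ∑ i ∈ P, g i • w i with hx
      have hx2 : x = ∑ i ∈ Q, (-g i) • w i := by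
        have h1 : x = -∑ i ∈ Q, g i • w i := eq_neg_of_add_eq_zero_left hsum
        rw [h1, ← Finset.sum_neg_distrib]
        exact Finset.sum_congr rfl fun j _ => (neg_smul _ _).symm
      have hxne : ∀ i ∈ P, ∀ j ∈ Q, (i : Fin N') ≠ j := by
        intro i hi j hj h
        subst h
        exact (Finset.disjoint_left.mp hdisj) hi hj
      have hxx : ⟪x, x⟫ ≤ 0 := by
        have hrw : (⟪x, x⟫ : ℝ) = ⟪∑ i ∈ P, g i • w i, ∑ j ∈ Q, (-g j) • w j⟫ := by
          rw [← hx, ← hx2]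
        rw [hrw, sum_inner]
        apply Finset.sum_nonpos
        intro i hi
        rw [real_inner_smul_left, inner_sum]
        apply mul_nonpos_of_nonneg_of_nonpos
        · simp only [hP, Finset.mem_filter] at hi; linarith [hi.2]
        apply Finset.sum_nonpos
        intro j hj
        rw [real_inner_smul_right]
        have hij : Fin.castSucc i ≠ Fin.castSucc j := by
          simp only [ne_eq, Fin.castSucc_inj]
          exact hxne i hi j hj
        have h2 : ⟪w i, w j⟫ < 0 := hneg _ _ hij
        simp only [hQ, Finset.mem_filter] at hj
        nlinarith [hj.2]
      have hx0 : x = 0 := real_inner_self_nonpos.mp hxx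
      have hlast : ∀ i : Fin N', Fin.castSucc i ≠ Fin.last N' :=
        fun i => ne_of_lt (Fin.castSucc_lt_last i)
      have hPe : P = ∅ := by
        by_contra hne
        have hne' : P.Nonempty := Finset.nonempty_iff_ne_empty.mpr hne
        have h0 : ⟪x, v (Fin.last N')⟫ = 0 := by rw [hx0]; simp
        rw [hx, sum_inner] at h0
        have : ∑ i ∈ P, ⟪g i • w i, v (Fin.last N')⟫ < 0 := by
          apply Finset.sum_neg ?_ hne'
          intro i hi
          rw [real_inner_smul_left]
          simp only [hP, Finset.mem_filter] at hi
          have h2 : ⟪w i, v (Fin.last N')⟫ < 0 := hneg _ _ (hlast i)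
          nlinarith [hi.2]
        linarith
      have hQe : Q = ∅ := by
        by_contra hne
        have hne' : Q.Nonempty := Finset.nonempty_iff_ne_empty.mpr hne
        have h0 : ⟪x, v (Fin.last N')⟫ = 0 := by rw [hx0]; simp
        rw [hx2, sum_inner] at h0
        have : ∑ i ∈ Q, ⟪(-g i) • w i, v (Fin.last N')⟫ < 0 := by
          apply Finset.sum_neg ?_ hne'
          intro i hi
          rw [real_inner_smul_left]
          simp only [hQ, Finset.mem_filter] at hi
          have h2 : ⟪w i, v (Fin.last N')⟫ < 0 := hneg _ _ (hlast i)
          nlinarith [hi.2]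
        linarith
      intro i
      have h1 : i ∉ P := by rw [hPe]; exact Finset.notMem_empty i
      have h2 : i ∉ Q := by rw [hQe]; exact Finset.notMem_empty i
      simp only [hP, hQ, Finset.mem_filter, Finset.mem_univ, true_and, not_lt] at h1 h2
      linarith
    have := hli.fintype_card_le_finrank
    simpa using this

noncomputable def sumLM (M : ℕ) : EuclideanSpace ℝ (Fin M) →ₗ[ℝ] ℝ where
  toFun x := ∑ i, x i
  map_add' x y := by simp [Finset.sum_add_distrib]
  map_smul' c x := by simp [Finset.mul_sum]

theorem iso_of_finrank_eq {E : Type*} [NormedAddCommGroup E] [InnerProductSpace ℝ E]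
    [FiniteDimensional ℝ E] {K : ℕ} (h : Module.finrank ℝ E = K) :
    Nonempty (E ≃ₗᵢ[ℝ] EuclideanSpace ℝ (Fin K)) := by
  subst h; exact ⟨(stdOrthonormalBasis ℝ E).repr⟩

theorem simplex_exists (K : ℕ) (hK : 0 < K) :
    ∃ f : Fin (K+1) → EuclideanSpace ℝ (Fin K), Function.Injective f ∧
    (∀ a, ‖f a‖ = 1) ∧ ∀ a b, a ≠ b → ⟪f a, f b⟫ = -1 / K := by
  have hsurj : Function.Surjective (sumLM (K+1)) := by
    intro r
    refine ⟨WithLp.toLp 2 (fun i => r / (K+1) : Fin (K+1) → ℝ), ?_⟩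
    show ∑ _i : Fin (K+1), r / ((K:ℝ)+1) = r
    rw [Finset.sum_const, Finset.card_univ, Fintype.card_fin]
    rw [nsmul_eq_mul]; push_cast
    field_simp
  have hdim : Module.finrank ℝ (LinearMap.ker (sumLM (K+1))) = K := by
    have h1 := (sumLM (K+1)).finrank_range_add_finrank_ker
    rw [LinearMap.range_eq_top.mpr hsurj, finrank_top, Module.finrank_self,
      finrank_euclideanSpace] at h1
    simp only [Fintype.card_fin] at h1
    omega
  obtain ⟨e⟩ := iso_of_finrank_eq hdim
  set c : ℝ := 1 / (K+1) with hc
  have hKpos : (0:ℝ) < K := by exact_mod_cast hK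
  have hc1 : c * ((K:ℝ)+1) = 1 := by rw [hc]; field_simp
  set one : EuclideanSpace ℝ (Fin (K+1)) := WithLp.toLp 2 (fun _ => 1) with hone
  set u : Fin (K+1) → EuclideanSpace ℝ (Fin (K+1)) :=
    fun a => EuclideanSpace.single a 1 - c • one with hu
  have humem : ∀ a, u a ∈ LinearMap.ker (sumLM (K+1)) := by
    intro a
    show ∑ i : Fin (K+1), (EuclideanSpace.single a (1:ℝ) - c • one) i = 0
    have : ∀ i : Fin (K+1), (EuclideanSpace.single a (1:ℝ) - c • one) i =
        (if i = a then (1:ℝ) else 0) - c := by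
      intro i
      simp [hone, EuclideanSpace.single_apply]
    rw [Finset.sum_congr rfl fun i _ => this i, Finset.sum_sub_distrib,
      Finset.sum_ite_eq' univ a (fun _ => (1:ℝ)), Finset.sum_const, Finset.card_univ,
      Fintype.card_fin]
    simp only [Finset.mem_univ, if_true]
    rw [nsmul_eq_mul]
    push_cast
    linarith [hc1]
  have h2 : ∀ a : Fin (K+1), ⟪EuclideanSpace.single a (1:ℝ), one⟫ = 1 := by
    intro a; rw [EuclideanSpace.inner_single_left]; simp [hone]
  have h3 : ∀ b : Fin (K+1), ⟪one, EuclideanSpace.single b (1:ℝ)⟫ = 1 := by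
    intro b; rw [EuclideanSpace.inner_single_right]; simp [hone]
  have h4 : (⟪one, one⟫ : ℝ) = (K:ℝ)+1 := by
    rw [PiLp.inner_apply]
    simp [hone]
  have h1 : ∀ a b : Fin (K+1), ⟪EuclideanSpace.single a (1:ℝ),
      EuclideanSpace.single b (1:ℝ)⟫ = if a = b then (1:ℝ) else 0 := by
    intro a b
    rw [EuclideanSpace.inner_single_left]
    simp [EuclideanSpace.single_apply]
  have huinner : ∀ a b, ⟪u a, u b⟫ = (if a = b then 1 else 0) - c := by
    intro a b
    rw [hu]
    simp only
    rw [inner_sub_left, inner_sub_right, inner_sub_right, real_inner_smul_left,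
      real_inner_smul_right, real_inner_smul_left, real_inner_smul_right, h1, h2, h3, h4]
    linear_combination c * hc1
  set α : ℝ := Real.sqrt ((K+1)/K) with hα
  have hα2 : α * α = ((K:ℝ)+1)/K := Real.mul_self_sqrt (by positivity)
  set vv : Fin (K+1) → LinearMap.ker (sumLM (K+1)) :=
    fun a => ⟨α • u a, Submodule.smul_mem _ _ (humem a)⟩ with hvv
  set f : Fin (K+1) → EuclideanSpace ℝ (Fin K) := fun a => e (vv a) with hf
  have hfinner : ∀ a b, ⟪f a, f b⟫ = if a = b then 1 else -1 / (K:ℝ) := by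
    intro a b
    have hh : (⟪f a, f b⟫ : ℝ) = ⟪(vv a : EuclideanSpace ℝ (Fin (K+1))),
        (vv b : EuclideanSpace ℝ (Fin (K+1)))⟫ := by
      rw [hf]; rw [e.inner_map_map]; rfl
    rw [hh]
    show (⟪α • u a, α • u b⟫ : ℝ) = _
    rw [real_inner_smul_left, real_inner_smul_right, huinner, ← mul_assoc, hα2, hc]
    by_cases h : a = b
    · simp only [h, if_true]
      field_simp
      ring
    · simp only [if_neg h]
      field_simp
      ring
  have hnorm : ∀ a, ‖f a‖ = 1 := by
    intro a
    have h1 := hfinner a a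
    rw [if_pos rfl, real_inner_self_eq_norm_sq] at h1
    nlinarith [norm_nonneg (f a)]
  refine ⟨f, ?_, hnorm, ?_⟩
  · intro a b hab
    by_contra hne
    have h1 := hfinner a b
    rw [if_neg hne, hab] at h1
    have h2 := hfinner b b
    rw [if_pos rfl] at h2
    rw [h2] at h1
    have hpos : (0:ℝ) < 1/K := by positivity
    have hneg' : (-1:ℝ)/K = -(1/K) := by ring
    linarith
  · intro a b hab
    rw [hfinner, if_neg hab]

noncomputable def blockSumLM (m n : ℕ) :
    EuclideanSpace ℝ (Fin m × Fin n) →ₗ[ℝ] (Fin m → ℝ) where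
  toFun x := fun j => ∑ i, x (j, i)
  map_add' x y := by funext j; simp [Finset.sum_add_distrib]
  map_smul' c x := by funext j; simp [Finset.mul_sum]

theorem mcwc_card_le (m n d w : ℕ)
    (hm : 1 ≤ m) (hd : 0 < d) (hw : 0 < w) (hwn : 2 * w ≤ n)
    (s : ℝ) (hs : s = 1 - (d : ℝ) * n / ((m : ℝ) * w * ((n : ℝ) - w)))
    (hs0 : s < 0) :
    ∀ C : Finset (Fin m × Fin n → Bool),
    (∀ c ∈ C, ∀ j : Fin m, (univ.filter fun i : Fin n => c (j, i) = true).card = w) →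
    (∀ u ∈ C, ∀ v ∈ C, u ≠ v → 2 * d ≤ hammingDist u v) →
    C.card ≤ m * (n - 1) + 1 := by
  intro C hwt hdist
  set K := m * (n - 1) with hK
  have hn2 : 2 ≤ n := by omega
  have hwn' : w < n := by omega
  have hn0 : (0:ℝ) < n := by positivity
  have hnw : (0:ℝ) < (n:ℝ) - w := by
    have : (w:ℝ) < n := by exact_mod_cast hwn'
    linarith
  have hm0 : (0:ℝ) < m := by positivity
  have hw0 : (0:ℝ) < w := by positivity
  -- dimension of the kernel
  have hsurj : Function.Surjective (blockSumLM m n) := by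
    intro y
    refine ⟨WithLp.toLp 2 (fun p => if p.2 = (⟨0, by omega⟩ : Fin n) then y p.1 else 0 :
      Fin m × Fin n → ℝ), ?_⟩
    funext j
    show (∑ i : Fin n, if i = (⟨0, by omega⟩ : Fin n) then y j else 0) = y j
    rw [Finset.sum_ite_eq' univ _ (fun _ => y j)]
    simp
  have hdim : Module.finrank ℝ (LinearMap.ker (blockSumLM m n)) = K := by
    have h1 := (blockSumLM m n).finrank_range_add_finrank_ker
    rw [LinearMap.range_eq_top.mpr hsurj, finrank_top, finrank_euclideanSpace] at h1
    rw [Module.finrank_fintype_fun_eq_card] at h1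
    simp only [Fintype.card_prod, Fintype.card_fin] at h1
    have h2 : m * n = m * (n - 1) + m := by
      have : n - 1 + 1 = n := by omega
      calc m * n = m * ((n-1) + 1) := by rw [this]
        _ = m * (n-1) + m := by ring
    omega
  obtain ⟨e⟩ : Nonempty ((LinearMap.ker (blockSumLM m n)) ≃ₗᵢ[ℝ]
      EuclideanSpace ℝ (Fin K)) := by
    rw [← hdim]
    exact ⟨(stdOrthonormalBasis ℝ _).repr⟩
  -- the embedded vectors
  set t : ℝ := w / n with ht
  set R : ℝ := m * w * ((n:ℝ) - w) / n with hR
  have hRpos : 0 < R := by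
    rw [hR]
    exact div_pos (mul_pos (mul_pos hm0 hw0) hnw) hn0
  have hRd : R < d := by
    have hden : (0:ℝ) < (m:ℝ) * w * ((n:ℝ) - w) := mul_pos (mul_pos hm0 hw0) hnw
    have h1 : 1 < (d:ℝ) * n / ((m:ℝ) * w * ((n:ℝ) - w)) := by
      rw [hs] at hs0; linarith
    rw [lt_div_iff₀ hden] at h1
    rw [hR, div_lt_iff₀ hn0]
    nlinarith
  set xv : (Fin m × Fin n → Bool) → EuclideanSpace ℝ (Fin m × Fin n) :=
    fun c => WithLp.toLp 2 (fun p => (if c p = true then 1 else 0) - t) with hxv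
  have hmem : ∀ c ∈ C, xv c ∈ LinearMap.ker (blockSumLM m n) := by
    intro c hc
    apply LinearMap.mem_ker.mpr
    funext j
    show (∑ i : Fin n, ((if c (j, i) = true then (1:ℝ) else 0) - t)) = 0
    rw [Finset.sum_sub_distrib, Finset.sum_boole, Finset.sum_const, Finset.card_univ,
      Fintype.card_fin, hwt c hc j, nsmul_eq_mul, ht]
    field_simp
    ring
  have hSχ : ∀ c ∈ C, ∑ p : Fin m × Fin n, (if c p = true then (1:ℝ) else 0) =
      (m:ℝ) * w := by
    intro c hc
    rw [Fintype.sum_prod_type]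
    have hj : ∀ j : Fin m, ∑ i : Fin n, (if c (j, i) = true then (1:ℝ) else 0) = w := by
      intro j
      rw [Finset.sum_boole, hwt c hc j]
    rw [Finset.sum_congr rfl fun j _ => hj j, Finset.sum_const, Finset.card_univ,
      Fintype.card_fin, nsmul_eq_mul]
  have hXX : ∀ c ∈ C, (⟪xv c, xv c⟫ : ℝ) = R := by
    intro c hc
    rw [PiLp.inner_apply]
    simp only [RCLike.inner_apply, conj_trivial]
    have hterm : ∀ p : Fin m × Fin n, (xv c p) * (xv c p) =
        (1 - 2*t) * (if c p = true then (1:ℝ) else 0) + t * t := by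
      intro p
      show ((if c p = true then (1:ℝ) else 0) - t) * ((if c p = true then (1:ℝ) else 0) - t) = _
      by_cases h : c p = true <;> simp [h] <;> ring
    rw [Finset.sum_congr rfl fun p _ => hterm p, Finset.sum_add_distrib, ← Finset.mul_sum,
      hSχ c hc, Finset.sum_const, Finset.card_univ]
    simp only [Fintype.card_prod, Fintype.card_fin, nsmul_eq_mul]
    rw [ht, hR]
    push_cast
    field_simp
    ring
  have hD : ∀ u v : Fin m × Fin n → Bool,
      (⟪xv u - xv v, xv u - xv v⟫ : ℝ) = (hammingDist u v : ℝ) := by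
    intro u v
    rw [PiLp.inner_apply]
    simp only [RCLike.inner_apply, conj_trivial]
    have hterm : ∀ p : Fin m × Fin n, ((xv u - xv v) p) * ((xv u - xv v) p) =
        if u p ≠ v p then (1:ℝ) else 0 := by
      intro p
      have h1 : (xv u - xv v) p =
          (if u p = true then (1:ℝ) else 0) - (if v p = true then 1 else 0) := by
        simp only [PiLp.sub_apply, hxv, PiLp.toLp_apply]
        ring
      rw [h1]
      cases hu' : u p <;> cases hv' : v p <;> simp [hu', hv']
    rw [Finset.sum_congr rfl fun p _ => hterm p, Finset.sum_boole]
    norm_cast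
  have hXY : ∀ u ∈ C, ∀ v ∈ C, u ≠ v → (⟪xv u, xv v⟫ : ℝ) < 0 := by
    intro u hu v hv huv
    have hDbig : (2*d : ℝ) ≤ (hammingDist u v : ℝ) := by
      exact_mod_cast hdist u hu v hv huv
    have h2 := hD u v
    have h3 : (⟪xv u - xv v, xv u - xv v⟫ : ℝ) =
        ⟪xv u, xv u⟫ - 2 * ⟪xv u, xv v⟫ + ⟪xv v, xv v⟫ := real_inner_sub_sub_self _ _
    rw [hXX u hu, hXX v hv, h2] at h3
    linarith
  -- finish
  set g : Fin C.card → EuclideanSpace ℝ (Fin K) :=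
    fun a => e ⟨xv (C.equivFin.symm a : Fin m × Fin n → Bool),
      hmem _ (Finset.coe_mem _)⟩ with hg
  have hgneg : ∀ a b, a ≠ b → (⟪g a, g b⟫ : ℝ) < 0 := by
    intro a b hab
    rw [hg]
    simp only
    rw [e.inner_map_map]
    have hne : (C.equivFin.symm a : Fin m × Fin n → Bool) ≠
        (C.equivFin.symm b : Fin m × Fin n → Bool) := by
      intro h
      exact hab (C.equivFin.symm.injective (Subtype.coe_injective h))
    exact hXY _ (Finset.coe_mem _) _ (Finset.coe_mem _) hne
  have := neg_inner_card_le g hgneg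
  rwa [finrank_euclideanSpace, Fintype.card_fin] at this

/-- For `m ≥ 1` and `0 < w ≤ n/2`, if `s = 1 - dn/(mw(n-w))` satisfies
`-1/(m(n-1)) ≤ s < 0`, then `M(m,n,2d,w) ≤ m(n-1) + 1`; this uses the fact that
`A_S(k,s) = k + 1` whenever `-1/k ≤ s < 0`, here with `k = m(n-1)`. -/
theorem mcwc_spherical_code_bound (m n d w : ℕ)
    (hm : 1 ≤ m) (hd : 0 < d) (hw : 0 < w) (hwn : 2 * w ≤ n)
    (s : ℝ) (hs : s = 1 - (d : ℝ) * n / ((m : ℝ) * w * ((n : ℝ) - w)))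
    (hs0 : s < 0) (hsk : -1 / ((m : ℝ) * ((n : ℝ) - 1)) ≤ s) :
    Asph (m * (n - 1)) s = m * (n - 1) + 1 ∧
      Mmcwc m n (2 * d) w ≤ m * (n - 1) + 1 := by
  have hn2 : 2 ≤ n := by omega
  set K := m * (n - 1) with hK
  have hK0 : 0 < K := by
    have h1 : 0 < n - 1 := by omega
    exact Nat.mul_pos hm h1
  have hKcast : (K : ℝ) = (m : ℝ) * ((n : ℝ) - 1) := by
    rw [hK]
    push_cast [Nat.cast_sub (by omega : 1 ≤ n)]
    ring
  have hub : ∀ N ∈ {N | ∃ f : Fin N → EuclideanSpace ℝ (Fin K),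
      Function.Injective f ∧ (∀ a, ‖f a‖ = 1) ∧ ∀ a b, a ≠ b → ⟪f a, f b⟫ ≤ s},
      N ≤ K + 1 := by
    rintro N ⟨f, hinj, hnorm, hip⟩
    have := neg_inner_card_le f (fun a b hab => lt_of_le_of_lt (hip a b hab) hs0)
    rwa [finrank_euclideanSpace, Fintype.card_fin] at this
  have hmemset : (K + 1) ∈ {N | ∃ f : Fin N → EuclideanSpace ℝ (Fin K),
      Function.Injective f ∧ (∀ a, ‖f a‖ = 1) ∧ ∀ a b, a ≠ b → ⟪f a, f b⟫ ≤ s} := by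
    obtain ⟨f, hinj, hnorm, hip⟩ := simplex_exists K hK0
    refine ⟨f, hinj, hnorm, fun a b hab => ?_⟩
    rw [hip a b hab, hKcast]
    exact hsk
  constructor
  · apply le_antisymm
    · exact csSup_le ⟨K + 1, hmemset⟩ hub
    · exact le_csSup ⟨K + 1, hub⟩ hmemset
  · apply csSup_le
    · exact ⟨0, ∅, by simp, by simp, by simp⟩
    · rintro N ⟨C, hwt, hdist, rfl⟩
      exact mcwc_card_le m n d w hm hd hw hwn s hs hs0 C hwt hdist
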